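/- Let X be a complex Banach space, θ₀ ∈ (0, π/2), κ > 0 and α ∈ (0,1). Let R⁺, R⁻ : (0,∞) → L(X) be strongly measurable operator-valued functions such that for every ρ > 0 one has ‖R^±(ρ)‖ ≤ κ/ρ, and for every ρ ∈ (0, 1/(2κ)] one has ‖R^±(ρ)‖ ≤ 2^α κ^α ρ^{α−1}. Then for every z ∈ ℂ with −α < Re z < 0: (a) the functions ρ ↦ (ρ e^{−iθ₀})^z • R⁺(ρ) and ρ ↦ (ρ e^{iθ₀})^z • R⁻(ρ) are Bochner integrable on (0,∞); and (b) the operator P(z) := (1/(2πi)) · ( e^{i(π−θ₀)} ∫₀^∞ (ρ e^{−iθ₀})^z R⁺(ρ) dρ − e^{−i(π−θ₀)} ∫₀^∞ (ρ e^{iθ₀})^z R⁻(ρ) dρ ) satisfies ‖P(z)‖ ≤ (e^{|Im z| θ₀}/π) · ( 2^α κ^α (2κ)^{−(α+Re z)}/(α + Re z) + κ (2κ)^{−Re z}/(−Re z) ). -/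

import Mathlib

open MeasureTheory

set_option maxHeartbeats 1000000 in
lemma ray_aux {X : Type*} [NormedAddCommGroup X] [NormedSpace ℂ X] [CompleteSpace X]
    (θ₀ κ α : ℝ) (hθ₀ : θ₀ ∈ Set.Ioo 0 (Real.pi / 2)) (hκ : 0 < κ)
    (hα : α ∈ Set.Ioo (0 : ℝ) 1)
    (θ : ℝ) (hθabs : |θ| ≤ θ₀)
    (R : ℝ → X →L[ℂ] X)
    (hmeas : AEStronglyMeasurable R (volume.restrict (Set.Ioi (0 : ℝ))))
    (h1 : ∀ ρ : ℝ, 0 < ρ → ‖R ρ‖ ≤ κ / ρ)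
    (h2 : ∀ ρ : ℝ, 0 < ρ → ρ ≤ 1 / (2 * κ) → ‖R ρ‖ ≤ 2 ^ α * κ ^ α * ρ ^ (α - 1))
    (z : ℂ) (hz₁ : -α < z.re) (hz₂ : z.re < 0) :
    IntegrableOn (fun ρ : ℝ => (((ρ : ℂ) * Complex.exp ((θ : ℂ) * Complex.I)) ^ z) • R ρ)
      (Set.Ioi 0) volume ∧
    ‖∫ ρ in Set.Ioi (0 : ℝ), (((ρ : ℂ) * Complex.exp ((θ : ℂ) * Complex.I)) ^ z) • R ρ‖ ≤
      Real.exp (|z.im| * θ₀) *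
        (2 ^ α * κ ^ α * (2 * κ) ^ (-(α + z.re)) / (α + z.re) +
          κ * (2 * κ) ^ (-z.re) / (-z.re)) := by
  obtain ⟨hθ₀0, hθ₀2⟩ := hθ₀
  obtain ⟨hα0, hα1⟩ := hα
  have hπ := Real.pi_pos
  have hθlt : |θ| < Real.pi / 2 := lt_of_le_of_lt hθabs hθ₀2
  obtain ⟨hθl, hθr⟩ := abs_lt.mp hθlt
  set c : ℝ := 1 / (2 * κ) with hc_def
  have hc : 0 < c := by positivity
  set E : ℝ := Real.exp (|z.im| * θ₀) with hE_def
  have hE0 : 0 < E := Real.exp_pos _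
  have hs : 0 < α + z.re := by linarith
  set f : ℝ → (X →L[ℂ] X) := fun ρ : ℝ => (((ρ : ℂ) * Complex.exp ((θ : ℂ) * Complex.I)) ^ z) • R ρ
    with hf_def
  -- pointwise norm bound
  have hnorm : ∀ ρ : ℝ, 0 < ρ → ‖f ρ‖ ≤ E * (ρ ^ z.re * ‖R ρ‖) := by
    intro ρ hρ
    have hw : ((ρ : ℂ) * Complex.exp ((θ : ℂ) * Complex.I)) ≠ 0 :=
      mul_ne_zero (by exact_mod_cast hρ.ne') (Complex.exp_ne_zero _)
    have habs : ‖(ρ : ℂ) * Complex.exp ((θ : ℂ) * Complex.I)‖ = ρ := by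
      rw [norm_mul, Complex.norm_real, Real.norm_eq_abs, Complex.norm_exp_ofReal_mul_I, abs_of_pos hρ, mul_one]
    have harg : Complex.arg ((ρ : ℂ) * Complex.exp ((θ : ℂ) * Complex.I)) = θ := by
      rw [Complex.exp_mul_I]
      refine Complex.arg_mul_cos_add_sin_mul_I hρ ⟨?_, ?_⟩ <;> linarith
    have hnv : ‖(((ρ : ℂ) * Complex.exp ((θ : ℂ) * Complex.I)) ^ z)‖
        = ρ ^ z.re / Real.exp (θ * z.im) := by
      rw [Complex.norm_cpow_of_ne_zero hw, habs, harg]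
    have hle : ρ ^ z.re / Real.exp (θ * z.im) ≤ ρ ^ z.re * E := by
      rw [div_eq_mul_inv, ← Real.exp_neg]
      refine mul_le_mul_of_nonneg_left ?_ (Real.rpow_nonneg hρ.le _)
      refine Real.exp_le_exp.mpr ?_
      calc -(θ * z.im) ≤ |θ * z.im| := neg_le_abs _
        _ = |θ| * |z.im| := abs_mul _ _
        _ ≤ θ₀ * |z.im| := mul_le_mul_of_nonneg_right hθabs (abs_nonneg _)
        _ = |z.im| * θ₀ := mul_comm _ _
    calc ‖f ρ‖ ≤ ‖(((ρ : ℂ) * Complex.exp ((θ : ℂ) * Complex.I)) ^ z)‖ * ‖R ρ‖ :=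
          ContinuousLinearMap.opNorm_smul_le _ _
      _ = ρ ^ z.re / Real.exp (θ * z.im) * ‖R ρ‖ := by rw [hnv]
      _ ≤ (ρ ^ z.re * E) * ‖R ρ‖ := mul_le_mul_of_nonneg_right hle (norm_nonneg _)
      _ = E * (ρ ^ z.re * ‖R ρ‖) := by ring
  -- measurability
  have hcos : 0 < Real.cos θ := Real.cos_pos_of_mem_Ioo ⟨hθl, hθr⟩
  have hfmeas : AEStronglyMeasurable f (volume.restrict (Set.Ioi (0 : ℝ))) := by
    refine AEStronglyMeasurable.fun_smul ?_ hmeas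
    refine (ContinuousOn.aestronglyMeasurable ?_ measurableSet_Ioi)
    intro ρ hρ
    have hρ : (0 : ℝ) < ρ := hρ
    have hre : 0 < ((ρ : ℂ) * Complex.exp ((θ : ℂ) * Complex.I)).re := by
      have h1 : ((θ : ℂ) * Complex.I).re = 0 := by simp
      have h2 : ((θ : ℂ) * Complex.I).im = θ := by simp
      rw [Complex.re_ofReal_mul, Complex.exp_re, h1, h2, Real.exp_zero, one_mul]
      positivity
    have hcont : ContinuousAt (fun w : ℂ => w ^ z) ((ρ : ℂ) * Complex.exp ((θ : ℂ) * Complex.I)) :=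
      continuousAt_cpow_const (Complex.mem_slitPlane_iff.mpr (Or.inl hre))
    have hb : ContinuousAt (fun ρ : ℝ => (ρ : ℂ) * Complex.exp ((θ : ℂ) * Complex.I)) ρ :=
      (Complex.continuous_ofReal.mul continuous_const).continuousAt
    exact (ContinuousAt.comp (g := fun w : ℂ => w ^ z)
      (f := fun ρ : ℝ => (ρ : ℂ) * Complex.exp ((θ : ℂ) * Complex.I)) hcont hb).continuousWithinAt
  -- integrability on the two pieces
  have hbound1 : ∀ ρ ∈ Set.Ioc (0 : ℝ) c,
      ‖f ρ‖ ≤ E * (2 ^ α * κ ^ α) * ρ ^ (α + z.re - 1) := by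
    intro ρ hρ
    refine (hnorm ρ hρ.1).trans ?_
    have hR := h2 ρ hρ.1 hρ.2
    calc E * (ρ ^ z.re * ‖R ρ‖) ≤ E * (ρ ^ z.re * (2 ^ α * κ ^ α * ρ ^ (α - 1))) := by
          refine mul_le_mul_of_nonneg_left (mul_le_mul_of_nonneg_left hR
            (Real.rpow_nonneg hρ.1.le _)) hE0.le
      _ = E * (2 ^ α * κ ^ α) * ρ ^ (α + z.re - 1) := by
          rw [show α + z.re - 1 = z.re + (α - 1) by ring, Real.rpow_add hρ.1]; ring
  have hbound2 : ∀ ρ ∈ Set.Ioi c, ‖f ρ‖ ≤ E * κ * ρ ^ (z.re - 1) := by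
    intro ρ hρ
    have hρ0 : 0 < ρ := hc.trans hρ
    refine (hnorm ρ hρ0).trans ?_
    have hR := h1 ρ hρ0
    calc E * (ρ ^ z.re * ‖R ρ‖) ≤ E * (ρ ^ z.re * (κ / ρ)) := by
          refine mul_le_mul_of_nonneg_left (mul_le_mul_of_nonneg_left hR
            (Real.rpow_nonneg hρ0.le _)) hE0.le
      _ = E * κ * ρ ^ (z.re - 1) := by
          rw [Real.rpow_sub hρ0, Real.rpow_one]; ring
  have hint1 : IntegrableOn (fun ρ : ℝ => E * (2 ^ α * κ ^ α) * ρ ^ (α + z.re - 1))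
      (Set.Ioc 0 c) volume := by
    have := intervalIntegral.intervalIntegrable_rpow' (r := α + z.re - 1) (by linarith)
      (a := 0) (b := c)
    rw [intervalIntegrable_iff_integrableOn_Ioc_of_le hc.le] at this
    exact this.const_mul _
  have hint2 : IntegrableOn (fun ρ : ℝ => E * κ * ρ ^ (z.re - 1)) (Set.Ioi c) volume :=
    (integrableOn_Ioi_rpow_of_lt (by linarith) hc).const_mul _
  have hi1 : IntegrableOn f (Set.Ioc 0 c) volume := by
    refine Integrable.mono' hint1 (hfmeas.mono_set Set.Ioc_subset_Ioi_self) ?_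
    filter_upwards [ae_restrict_mem measurableSet_Ioc] with ρ hρ using hbound1 ρ hρ
  have hi2 : IntegrableOn f (Set.Ioi c) volume := by
    refine Integrable.mono' hint2 (hfmeas.mono_set (Set.Ioi_subset_Ioi hc.le)) ?_
    filter_upwards [ae_restrict_mem measurableSet_Ioi] with ρ hρ using hbound2 ρ hρ
  have hsplit : Set.Ioc (0 : ℝ) c ∪ Set.Ioi c = Set.Ioi 0 := Set.Ioc_union_Ioi_eq_Ioi hc.le
  have hint : IntegrableOn f (Set.Ioi 0) volume := by
    rw [← hsplit]; exact hi1.union hi2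
  refine ⟨hint, ?_⟩
  -- value of the two model integrals
  have hval1 : ∫ ρ in Set.Ioc (0 : ℝ) c, ρ ^ (α + z.re - 1) = c ^ (α + z.re) / (α + z.re) := by
    rw [← intervalIntegral.integral_of_le hc.le,
      integral_rpow (Or.inl (by linarith : (-1 : ℝ) < α + z.re - 1))]
    rw [show α + z.re - 1 + 1 = α + z.re by ring, Real.zero_rpow hs.ne', sub_zero]
  have hval2 : ∫ ρ in Set.Ioi c, ρ ^ (z.re - 1) = c ^ z.re / (-z.re) := by
    rw [integral_Ioi_rpow_of_lt (by linarith) hc, show z.re - 1 + 1 = z.re by ring]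
    rw [div_neg, neg_div]
  have hcs : ∀ s : ℝ, c ^ s = (2 * κ) ^ (-s) := by
    intro s
    rw [Real.rpow_neg (by positivity), ← Real.inv_rpow (by positivity), hc_def, one_div]
  calc ‖∫ ρ in Set.Ioi (0 : ℝ), f ρ‖ ≤ ∫ ρ in Set.Ioi (0 : ℝ), ‖f ρ‖ :=
        norm_integral_le_integral_norm _
    _ = (∫ ρ in Set.Ioc (0 : ℝ) c, ‖f ρ‖) + ∫ ρ in Set.Ioi c, ‖f ρ‖ := by
        rw [← hsplit, setIntegral_union (Set.Ioc_disjoint_Ioi le_rfl) measurableSet_Ioi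
          hi1.norm hi2.norm]
    _ ≤ (∫ ρ in Set.Ioc (0 : ℝ) c, E * (2 ^ α * κ ^ α) * ρ ^ (α + z.re - 1))
        + ∫ ρ in Set.Ioi c, E * κ * ρ ^ (z.re - 1) := by
        refine add_le_add ?_ ?_
        · exact setIntegral_mono_on hi1.norm hint1 measurableSet_Ioc hbound1
        · exact setIntegral_mono_on hi2.norm hint2 measurableSet_Ioi hbound2
    _ = E * (2 ^ α * κ ^ α) * (c ^ (α + z.re) / (α + z.re))
        + E * κ * (c ^ z.re / (-z.re)) := by
        rw [integral_const_mul, integral_const_mul, hval1, hval2]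
    _ = E * (2 ^ α * κ ^ α * (2 * κ) ^ (-(α + z.re)) / (α + z.re) +
          κ * (2 * κ) ^ (-z.re) / (-z.re)) := by
        rw [← hcs, ← hcs]; ring

set_option maxHeartbeats 1000000 in
theorem stmt_5 {X : Type*} [NormedAddCommGroup X] [NormedSpace ℂ X] [CompleteSpace X]
    (θ₀ κ α : ℝ) (hθ₀ : θ₀ ∈ Set.Ioo 0 (Real.pi / 2)) (hκ : 0 < κ)
    (hα : α ∈ Set.Ioo (0 : ℝ) 1)
    (Rp Rm : ℝ → X →L[ℂ] X)
    (hRpMeas : AEStronglyMeasurable Rp (volume.restrict (Set.Ioi (0 : ℝ))))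
    (hRmMeas : AEStronglyMeasurable Rm (volume.restrict (Set.Ioi (0 : ℝ))))
    (hRp₁ : ∀ ρ : ℝ, 0 < ρ → ‖Rp ρ‖ ≤ κ / ρ)
    (hRm₁ : ∀ ρ : ℝ, 0 < ρ → ‖Rm ρ‖ ≤ κ / ρ)
    (hRp₂ : ∀ ρ : ℝ, 0 < ρ → ρ ≤ 1 / (2 * κ) → ‖Rp ρ‖ ≤ 2 ^ α * κ ^ α * ρ ^ (α - 1))
    (hRm₂ : ∀ ρ : ℝ, 0 < ρ → ρ ≤ 1 / (2 * κ) → ‖Rm ρ‖ ≤ 2 ^ α * κ ^ α * ρ ^ (α - 1))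
    (z : ℂ) (hz₁ : -α < z.re) (hz₂ : z.re < 0) :
    MeasureTheory.IntegrableOn
      (fun ρ : ℝ => (((ρ : ℂ) * Complex.exp (-(θ₀ : ℂ) * Complex.I)) ^ z) • Rp ρ)
      (Set.Ioi 0) volume ∧
    MeasureTheory.IntegrableOn
      (fun ρ : ℝ => (((ρ : ℂ) * Complex.exp ((θ₀ : ℂ) * Complex.I)) ^ z) • Rm ρ)
      (Set.Ioi 0) volume ∧
    ‖(1 / (2 * (Real.pi : ℂ) * Complex.I)) •
        (Complex.exp (((Real.pi - θ₀ : ℝ) : ℂ) * Complex.I) •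
            (∫ ρ in Set.Ioi (0 : ℝ),
              (((ρ : ℂ) * Complex.exp (-(θ₀ : ℂ) * Complex.I)) ^ z) • Rp ρ) -
          Complex.exp (-((Real.pi - θ₀ : ℝ) : ℂ) * Complex.I) •
            (∫ ρ in Set.Ioi (0 : ℝ),
              (((ρ : ℂ) * Complex.exp ((θ₀ : ℂ) * Complex.I)) ^ z) • Rm ρ))‖ ≤
      (Real.exp (|z.im| * θ₀) / Real.pi) *
        (2 ^ α * κ ^ α * (2 * κ) ^ (-(α + z.re)) / (α + z.re) +
          κ * (2 * κ) ^ (-z.re) / (-z.re)) := by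
  have hπ := Real.pi_pos
  obtain ⟨hIp, hNp⟩ := ray_aux θ₀ κ α hθ₀ hκ hα (-θ₀)
    (by rw [abs_neg, abs_of_pos hθ₀.1]) Rp hRpMeas hRp₁ hRp₂ z hz₁ hz₂
  obtain ⟨hIm, hNm⟩ := ray_aux θ₀ κ α hθ₀ hκ hα θ₀
    (by rw [abs_of_pos hθ₀.1]) Rm hRmMeas hRm₁ hRm₂ z hz₁ hz₂
  simp only [Complex.ofReal_neg, neg_mul] at hIp hNp
  rw [show -(θ₀ : ℂ) * Complex.I = -((θ₀ : ℂ) * Complex.I) by ring]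
  refine ⟨hIp, hIm, ?_⟩
  set I₁ := ∫ ρ in Set.Ioi (0 : ℝ),
    (((ρ : ℂ) * Complex.exp (-((θ₀ : ℂ) * Complex.I))) ^ z) • Rp ρ
  set I₂ := ∫ ρ in Set.Ioi (0 : ℝ),
    (((ρ : ℂ) * Complex.exp ((θ₀ : ℂ) * Complex.I)) ^ z) • Rm ρ
  set E : ℝ := Real.exp (|z.im| * θ₀) with hE_def
  set B : ℝ := 2 ^ α * κ ^ α * (2 * κ) ^ (-(α + z.re)) / (α + z.re) +
    κ * (2 * κ) ^ (-z.re) / (-z.re) with hB_def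
  have hnc : ‖(1 / (2 * (Real.pi : ℂ) * Complex.I))‖ = 1 / (2 * Real.pi) := by
    simp [map_div₀, abs_of_pos Real.pi_pos]
  have hna : ‖Complex.exp (((Real.pi - θ₀ : ℝ) : ℂ) * Complex.I)‖ = 1 := by
    rw [Complex.norm_exp_ofReal_mul_I]
  have hnb : ‖Complex.exp (-((Real.pi - θ₀ : ℝ) : ℂ) * Complex.I)‖ = 1 := by
    rw [show -((Real.pi - θ₀ : ℝ) : ℂ) = ((-(Real.pi - θ₀) : ℝ) : ℂ) by push_cast; ring]
    rw [Complex.norm_exp_ofReal_mul_I]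
  have hsub : ‖Complex.exp (((Real.pi - θ₀ : ℝ) : ℂ) * Complex.I) • I₁ -
      Complex.exp (-((Real.pi - θ₀ : ℝ) : ℂ) * Complex.I) • I₂‖ ≤ E * B + E * B := by
    refine (norm_sub_le _ _).trans ?_
    refine add_le_add ((ContinuousLinearMap.opNorm_smul_le _ _).trans ?_) ((ContinuousLinearMap.opNorm_smul_le _ _).trans ?_)
    · rw [hna, one_mul]; exact hNp
    · rw [hnb, one_mul]; exact hNm
  calc ‖(1 / (2 * (Real.pi : ℂ) * Complex.I)) •
        (Complex.exp (((Real.pi - θ₀ : ℝ) : ℂ) * Complex.I) • I₁ -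
          Complex.exp (-((Real.pi - θ₀ : ℝ) : ℂ) * Complex.I) • I₂)‖
      ≤ (1 / (2 * Real.pi)) * ‖Complex.exp (((Real.pi - θ₀ : ℝ) : ℂ) * Complex.I) • I₁ -
          Complex.exp (-((Real.pi - θ₀ : ℝ) : ℂ) * Complex.I) • I₂‖ := by
        rw [← hnc]; exact ContinuousLinearMap.opNorm_smul_le _ _
    _ ≤ (1 / (2 * Real.pi)) * (E * B + E * B) := by
        refine mul_le_mul_of_nonneg_left hsub (by positivity)
    _ = (E / Real.pi) * B := by field_simp; ring
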